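/- For every integer k ≥ 1, arctan(c_k) = ∑_{j=1}^{k} arctan(b_j); in particular c_k = tan(π/4 − π/2^{k+2}). -/

import Mathlib

open Real Filter Topology

private lemma my_tan_add {s t : ℝ} (hs : Real.cos s ≠ 0) (ht : Real.cos t ≠ 0)
    (hst : Real.cos (s + t) ≠ 0) :
    Real.tan (s + t) = (Real.tan s + Real.tan t) / (1 - Real.tan s * Real.tan t) := by
  have h1 : Real.cos (s + t) = Real.cos s * Real.cos t * (1 - Real.tan s * Real.tan t) := by
    rw [Real.cos_add, Real.tan_eq_sin_div_cos, Real.tan_eq_sin_div_cos]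
    field_simp
  have h2 : Real.sin (s + t) = Real.cos s * Real.cos t * (Real.tan s + Real.tan t) := by
    rw [Real.sin_add, Real.tan_eq_sin_div_cos, Real.tan_eq_sin_div_cos]
    field_simp
  have h3 : (1 - Real.tan s * Real.tan t) ≠ 0 := by
    intro h
    apply hst
    rw [h1, h, mul_zero]
  rw [Real.tan_eq_sin_div_cos, h1, h2]
  field_simp

private lemma theta_pos (k : ℕ) : 0 < π / 2 ^ (k + 2) :=
  div_pos Real.pi_pos (by positivity)

private lemma theta_le (k : ℕ) (hk : 1 ≤ k) : π / 2 ^ (k + 2) ≤ π / 8 := by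
  apply div_le_div_of_nonneg_left Real.pi_pos.le (by norm_num)
  calc (8 : ℝ) = 2 ^ 3 := by norm_num
  _ ≤ 2 ^ (k + 2) := by
      apply pow_le_pow_right₀ (by norm_num)
      omega

theorem arctan_c_eq_partial_sum (a : ℕ → ℝ)
    (ha1 : a 1 = Real.sqrt 2)
    (ha : ∀ k ≥ 1, a (k + 1) = Real.sqrt (2 + a k))
    (b : ℕ → ℝ)
    (hb : ∀ k ≥ 1, b k = Real.sqrt (2 - a k) / a (k + 1))
    (c : ℕ → ℝ)
    (hc1 : c 1 = b 1)
    (hc : ∀ k ≥ 1, c (k + 1) = (c k + b (k + 1)) / (1 - c k * b (k + 1))) :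
    ∀ k ≥ 1, Real.arctan (c k) = ∑ j ∈ Finset.Icc 1 k, Real.arctan (b j) ∧
      c k = Real.tan (π / 4 - π / 2 ^ (k + 2)) := by
  -- a k = 2 cos (π / 2^(k+1))
  have hacos : ∀ k ≥ 1, a k = 2 * Real.cos (π / 2 ^ (k + 1)) := by
    intro k hk
    induction k with
    | zero => omega
    | succ n ih =>
      rcases Nat.lt_or_ge n 1 with hn | hn
      · interval_cases n
        rw [ha1]
        norm_num [Real.cos_pi_div_four]
        ring
      · have hcosn := ih hn
        rw [ha n hn, hcosn]
        have hdouble : π / 2 ^ (n + 1) = 2 * (π / 2 ^ (n + 1 + 1)) := by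
          rw [pow_succ]; ring
        have hsq := Real.cos_sq (π / 2 ^ (n + 1 + 1))
        have h2 : 2 + 2 * Real.cos (π / 2 ^ (n + 1)) =
            (2 * Real.cos (π / 2 ^ (n + 1 + 1))) ^ 2 := by
          rw [hdouble]; nlinarith [hsq]
        rw [h2, Real.sqrt_sq]
        have := theta_pos n
        have hlt : π / 2 ^ (n + 2) < π / 2 := by
          apply div_lt_div_of_pos_left Real.pi_pos (by norm_num)
          calc (2:ℝ) = 2 ^ 1 := by norm_num
          _ < 2 ^ (n + 2) := by
              apply pow_lt_pow_right₀ (by norm_num); omega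
        have hc := Real.cos_pos_of_mem_Ioo
          (x := π / 2 ^ (n + 2)) ⟨by linarith [theta_pos n], hlt⟩
        positivity
  -- b k = tan (π / 2^(k+2))
  have hbtan : ∀ k ≥ 1, b k = Real.tan (π / 2 ^ (k + 2)) := by
    intro k hk
    have hak := hacos k hk
    have hak1 := hacos (k + 1) (by omega)
    have hdouble : π / 2 ^ (k + 1) = 2 * (π / 2 ^ (k + 2)) := by
      rw [pow_succ]; ring
    have hsinpos : 0 ≤ Real.sin (π / 2 ^ (k + 2)) := by
      apply Real.sin_nonneg_of_nonneg_of_le_pi (theta_pos k).le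
      have : π / 2 ^ (k + 2) ≤ π / 8 := theta_le k hk
      linarith [Real.pi_pos]
    have hsq := Real.sin_sq_eq_half_sub (π / 2 ^ (k + 2))
    have h2 : 2 - a k = (2 * Real.sin (π / 2 ^ (k + 2))) ^ 2 := by
      rw [hak, hdouble]; nlinarith [hsq]
    rw [hb k hk, h2, Real.sqrt_sq (by positivity), hak1, Real.tan_eq_sin_div_cos]
    have : k + 1 + 1 = k + 2 := rfl
    rw [this]
    rw [mul_div_mul_left _ _ (two_ne_zero)]
  -- geometric sum
  have hsum : ∀ k ≥ 1, ∑ j ∈ Finset.Icc 1 k, π / 2 ^ (j + 2) = π / 4 - π / 2 ^ (k + 2) := by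
    intro k hk
    induction k with
    | zero => omega
    | succ n ih =>
      rcases Nat.lt_or_ge n 1 with hn | hn
      · interval_cases n
        simp
        ring
      · rw [Finset.sum_Icc_succ_top (by omega), ih hn]
        have : π / 2 ^ (n + 2) = 2 * (π / 2 ^ (n + 1 + 2)) := by
          rw [pow_succ]
          ring
        rw [this]; ring
  -- bounds on angle
  have hangle : ∀ k : ℕ, 1 ≤ k → -(π/2) < π / 4 - π / 2 ^ (k + 2) ∧ π / 4 - π / 2 ^ (k + 2) < π / 2 := by
    intro k hk
    have h1 := theta_pos k
    have h2 := theta_le k hk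
    constructor <;> linarith [Real.pi_pos]
  -- main induction: arctan (c k) = π/4 - π/2^(k+2)
  have hmain : ∀ k ≥ 1, Real.arctan (c k) = π / 4 - π / 2 ^ (k + 2) := by
    intro k hk
    induction k with
    | zero => omega
    | succ n ih =>
      rcases Nat.lt_or_ge n 1 with hn | hn
      · interval_cases n
        rw [hc1, hbtan 1 le_rfl]
        rw [Real.arctan_tan]
        · ring
        · linarith [theta_pos 1, Real.pi_pos]
        · linarith [theta_le 1 le_rfl, Real.pi_pos]
      · have ihn := ih hn
        set s := π / 4 - π / 2 ^ (n + 2) with hs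
        set t := π / 2 ^ (n + 1 + 2) with ht
        have hbound := hangle n hn
        have hcn : c n = Real.tan s := by
          rw [← ihn, Real.tan_arctan]
        have hbn : b (n + 1) = Real.tan t := hbtan (n + 1) (by omega)
        have hst : s + t = π / 4 - π / 2 ^ (n + 1 + 2) := by
          rw [hs, ht]
          have : π / 2 ^ (n + 2) = 2 * (π / 2 ^ (n + 1 + 2)) := by
            rw [pow_succ]; ring
          rw [this]; ring
        have hbound' := hangle (n + 1) (by omega)
        have htpos := theta_pos (n + 1)
        have htle := theta_le (n + 1) (by omega)
        have hcoss : Real.cos s ≠ 0 := by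
          apply ne_of_gt
          apply Real.cos_pos_of_mem_Ioo
          exact ⟨hbound.1, hbound.2⟩
        have hcost : Real.cos t ≠ 0 := by
          apply ne_of_gt
          exact Real.cos_pos_of_mem_Ioo
            ⟨by rw [ht]; linarith [theta_pos (n+1), theta_le (n+1) (by omega), Real.pi_pos], by rw [ht]; linarith [theta_pos (n+1), theta_le (n+1) (by omega), Real.pi_pos]⟩
        have hcosst : Real.cos (s + t) ≠ 0 := by
          apply ne_of_gt
          apply Real.cos_pos_of_mem_Ioo
          rw [hst]
          exact ⟨hbound'.1, hbound'.2⟩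
        rw [hc n hn, hcn, hbn, ← my_tan_add hcoss hcost hcosst]
        rw [Real.arctan_tan]
        · rw [hst]
        · rw [hst]; exact hbound'.1
        · rw [hst]; exact hbound'.2
  intro k hk
  have h1 := hmain k hk
  constructor
  · rw [h1, ← hsum k hk]
    apply Finset.sum_congr rfl
    intro j hj
    simp only [Finset.mem_Icc] at hj
    rw [hbtan j hj.1, Real.arctan_tan]
    · linarith [theta_pos j, Real.pi_pos]
    · linarith [theta_le j hj.1, Real.pi_pos]
  · rw [← h1, Real.tan_arctan]
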